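/- Let G be a finite solvable group whose Frattini subgroup Φ has nilpotency class c, with k(Φ) ≥ (c/2)|Φ|^(1/c) and k(G/Φ) ≥ |G/Φ|^β for a constant 0 < β ≤ 1. Then k(G) > ((1/2)·c·|G|^(1/c))^(β/3). -/

import Mathlib

lemma card_conjClasses_quotient_le' {G : Type*} [Group G] [Finite G] (N : Subgroup G) [N.Normal] :
    Nat.card (ConjClasses (G ⧸ N)) ≤ Nat.card (ConjClasses G) :=
  Nat.card_le_card_of_surjective (ConjClasses.map (QuotientGroup.mk' N))
    (ConjClasses.map_surjective (QuotientGroup.mk'_surjective N))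

lemma card_conjClasses_subgroup_le' {G : Type*} [Group G] [Finite G] (N : Subgroup G) :
    Nat.card (ConjClasses N) ≤ Nat.card (ConjClasses G) * Nat.card (G ⧸ N) := by
  classical
  rw [← Nat.card_prod]
  choose repN hN using fun c : ConjClasses N => c.exists_rep
  choose repG hG using fun d : ConjClasses G => d.exists_rep
  have key : ∀ c : ConjClasses N, ∃ g : G,
      g * repG (ConjClasses.mk ((repN c : G))) * g⁻¹ = (repN c : G) := by
    intro c
    refine isConj_iff.mp ?_
    rw [← ConjClasses.mk_eq_mk_iff_isConj, hG]
  choose gc hgc using key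
  apply Nat.card_le_card_of_injective
    (fun c : ConjClasses N => ((ConjClasses.mk ((repN c : G)) : ConjClasses G),
      (QuotientGroup.mk ((gc c)⁻¹) : G ⧸ N)))
  intro c₁ c₂ h
  simp only [Prod.mk.injEq] at h
  obtain ⟨h1, h2⟩ := h
  have hn : (gc c₁) * (gc c₂)⁻¹ ∈ N := by
    have := QuotientGroup.eq.mp h2
    rwa [inv_inv] at this
  have e1 := hgc c₁
  have e2 := hgc c₂
  rw [h1] at e1
  set y := repG (ConjClasses.mk ((repN c₂ : G))) with hy
  have hx : ((⟨gc c₁ * (gc c₂)⁻¹, hn⟩ : N) * repN c₂ * (⟨gc c₁ * (gc c₂)⁻¹, hn⟩ : N)⁻¹ : N)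
      = repN c₁ := by
    apply Subtype.ext
    push_cast
    rw [← e1, ← e2]
    group
  rw [← hN c₁, ← hN c₂, ← hx, ConjClasses.mk_eq_mk_iff_isConj]
  exact (isConj_iff.mpr ⟨_, rfl⟩).symm

lemma lemA' {β q W L : ℝ} (hβ0 : 0 ≤ β) (hβ1 : β ≤ 1) (hq : 0 < q) (hL1 : 1 ≤ L)
    (hW : 0 ≤ W) (hWq : W / q ≤ L) (hqL : q ^ β ≤ L) : (W * q) ^ β ≤ L ^ (3 : ℕ) := by
  have hL0 : (0:ℝ) < L := lt_of_lt_of_le one_pos hL1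
  have h1 : W * q = (W / q) * q ^ (2:ℕ) := by field_simp
  have h2 : ((W / q) * q ^ (2:ℕ)) ^ β = (W / q) ^ β * (q ^ β) ^ (2:ℕ) := by
    rw [Real.mul_rpow (div_nonneg hW hq.le) (pow_nonneg hq.le 2),
      ← Real.rpow_natCast q 2, ← Real.rpow_natCast (q ^ β) 2,
      ← Real.rpow_mul hq.le, ← Real.rpow_mul hq.le]
    ring_nf
  have h3 : (W / q) ^ β ≤ L := by
    calc (W / q) ^ β ≤ L ^ β := Real.rpow_le_rpow (div_nonneg hW hq.le) hWq hβ0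
    _ ≤ L ^ (1:ℝ) := Real.rpow_le_rpow_of_exponent_le hL1 hβ1
    _ = L := Real.rpow_one L
  have h4 : (q ^ β) ^ (2:ℕ) ≤ L ^ (2:ℕ) :=
    pow_le_pow_left₀ (Real.rpow_nonneg hq.le β) hqL 2
  calc (W * q) ^ β = (W / q) ^ β * (q ^ β) ^ (2:ℕ) := by rw [h1, h2]
    _ ≤ L * L ^ (2:ℕ) := mul_le_mul h3 h4 (by positivity) hL0.le
    _ = L ^ (3:ℕ) := by ring

lemma cube_bound' {X L β : ℝ} (hX : 0 ≤ X) (hL : 0 < L) (h : X ^ β < L ^ (3 : ℕ)) :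
    X ^ (β / 3) < L := by
  have h3 : X ^ (β / 3) = (X ^ β) ^ ((1:ℝ)/3) := by
    rw [← Real.rpow_mul hX]; ring_nf
  rw [h3]
  have h' : X ^ β < L ^ ((3:ℕ) : ℝ) := by rwa [Real.rpow_natCast]
  calc (X ^ β) ^ ((1:ℝ)/3) < (L ^ ((3:ℕ):ℝ)) ^ ((1:ℝ)/3) :=
        Real.rpow_lt_rpow (Real.rpow_nonneg hX β) h' (by norm_num)
    _ = L := by rw [← Real.rpow_mul hL.le]; norm_num

/-- If the Frattini subgroup `Φ` of the finite solvable group `G` has nilpotency class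
`c ≥ 1`, `|Φ| ≥ 2`, `k(Φ) ≥ (c/2)·|Φ|^(1/c)` and `k(G/Φ) ≥ |G/Φ|^β` with `0 < β ≤ 1`,
then `k(G) > ((1/2)·c·|G|^(1/c))^(β/3)`. -/
instance frattiniNilpotent (G : Type*) [Group G] [Finite G] :
    Group.IsNilpotent (frattini G) := frattini_nilpotent

theorem stmt15 (G : Type*) [Group G] [Finite G] [Group.IsSolvable G] (β : ℝ)
    (hβ0 : 0 < β) (hβ1 : β ≤ 1) (c : ℕ)
    (hc : c = Group.nilpotencyClass (frattini G)) (hc1 : 1 ≤ c)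
    (hΦ : 2 ≤ Nat.card (frattini G))
    (hkΦ : (Nat.card (ConjClasses (frattini G)) : ℝ) ≥
      (c / 2 : ℝ) * (Nat.card (frattini G) : ℝ) ^ ((1 : ℝ) / c))
    (hQ : (Nat.card (ConjClasses (G ⧸ frattini G)) : ℝ) ≥
      (Nat.card (G ⧸ frattini G) : ℝ) ^ β) :
    (Nat.card (ConjClasses G) : ℝ) >
      ((1 / 2 : ℝ) * c * (Nat.card G : ℝ) ^ ((1 : ℝ) / c)) ^ (β / 3) := by
  classical
  set K : ℝ := (Nat.card (ConjClasses (frattini G)) : ℝ) with hKdef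
  set L : ℝ := (Nat.card (ConjClasses G) : ℝ) with hLdef
  set q : ℝ := (Nat.card (G ⧸ frattini G) : ℝ) with hqdef
  set φv : ℝ := (Nat.card (frattini G) : ℝ) with hφdef
  have hq1 : (1:ℝ) ≤ q := by
    rw [hqdef]; exact_mod_cast Nat.one_le_iff_ne_zero.mpr Nat.card_pos.ne'
  have hq0 : (0:ℝ) < q := lt_of_lt_of_le one_pos hq1
  have hL1 : (1:ℝ) ≤ L := by
    rw [hLdef]; exact_mod_cast Nat.one_le_iff_ne_zero.mpr Nat.card_pos.ne'
  have hL0 : (0:ℝ) < L := lt_of_lt_of_le one_pos hL1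
  have hφ2 : (2:ℝ) ≤ φv := by rw [hφdef]; exact_mod_cast hΦ
  have hφ0 : (0:ℝ) < φv := by linarith
  have hK1 : (1:ℝ) ≤ K := by
    rw [hKdef]; exact_mod_cast Nat.one_le_iff_ne_zero.mpr Nat.card_pos.ne'
  have hK0 : (0:ℝ) < K := lt_of_lt_of_le one_pos hK1
  have hLq : q ^ β ≤ L := by
    refine le_trans hQ ?_
    rw [hLdef]
    exact_mod_cast card_conjClasses_quotient_le' (frattini G)
  have hKLq : K ≤ L * q := by
    rw [hKdef, hLdef, hqdef]
    exact_mod_cast card_conjClasses_subgroup_le' (frattini G)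
  have hGr : (Nat.card G : ℝ) = q * φv := by
    rw [hqdef, hφdef]
    exact_mod_cast Subgroup.card_eq_card_quotient_mul_card_subgroup (frattini G)
  have hc0 : (0:ℝ) < (c:ℝ) := by exact_mod_cast Nat.lt_of_lt_of_le Nat.zero_lt_one hc1
  rw [gt_iff_lt]
  apply cube_bound' (by positivity) hL0
  have hX2 : (1/2 : ℝ) * c * (Nat.card G : ℝ) ^ ((1:ℝ)/c)
      = ((c:ℝ)/2 * φv ^ ((1:ℝ)/c)) * q ^ ((1:ℝ)/c) := by
    rw [hGr, Real.mul_rpow hq0.le hφ0.le]; ring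
  rw [hX2]
  rcases eq_or_lt_of_le hc1 with h1 | h2
  · -- c = 1
    have hcc : c = 1 := h1.symm
    subst hcc
    -- K = φv since frattini G is abelian
    have htop : upperCentralSeries (frattini G) 1 = ⊤ := by
      have h := upperCentralSeries_nilpotencyClass (G := (frattini G))
      rwa [← hc] at h
    have hcen : Subgroup.center (frattini G) = ⊤ := by
      rwa [← upperCentralSeries_one]
    have hcomm : ∀ a b : (frattini G), a * b = b * a := by
      intro a b
      have hb : b ∈ Subgroup.center (frattini G) := hcen ▸ Subgroup.mem_top b
      exact Subgroup.mem_center_iff.mp hb a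
    have hinj : Function.Injective (ConjClasses.mk : (frattini G) → ConjClasses (frattini G)) := by
      intro a b hab
      obtain ⟨u, hu⟩ := isConj_iff.mp (ConjClasses.mk_eq_mk_iff_isConj.mp hab)
      rw [← hu, hcomm u a, mul_inv_cancel_right]
    have hKφ : K = φv := by
      rw [hKdef, hφdef]
      exact_mod_cast (Nat.card_eq_of_bijective _ ⟨hinj, ConjClasses.mk_surjective⟩).symm
    simp only [Nat.cast_one, div_one, Real.rpow_one]
    have hWq : max K q / q ≤ L := by
      rw [div_le_iff₀ hq0]
      exact max_le hKLq (le_mul_of_one_le_left hq0.le hL1)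
    calc (1/2 * φv * q) ^ β < (max K q * q) ^ β := by
          apply Real.rpow_lt_rpow (by positivity) ?_ hβ0
          have : (1/2 : ℝ) * φv = K / 2 := by rw [hKφ]; ring
          rw [this]
          exact mul_lt_mul_of_pos_right
            (lt_of_lt_of_le (by linarith : K/2 < K) (le_max_left _ _)) hq0
      _ ≤ L ^ (3:ℕ) := lemA' hβ0.le hβ1 hq0 hL1 (by positivity) hWq hLq
  · -- 2 ≤ c
    have hc2 : (2:ℝ) ≤ (c:ℝ) := by exact_mod_cast h2
    set A : ℝ := (c:ℝ)/2 * φv ^ ((1:ℝ)/c) with hAdef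
    have hA0 : (0:ℝ) < A := by positivity
    have hAK : A ≤ K := hkΦ
    by_cases hq2 : 1 < q
    · have h5 : q ^ ((1:ℝ)/c) < q := by
        calc q ^ ((1:ℝ)/c) < q ^ (1:ℝ) :=
              Real.rpow_lt_rpow_of_exponent_lt hq2
                (by rw [div_lt_one hc0]; linarith)
          _ = q := Real.rpow_one q
      have hWq : max A q / q ≤ L := by
        rw [div_le_iff₀ hq0]
        exact max_le (le_trans hAK hKLq) (le_mul_of_one_le_left hq0.le hL1)
      calc (A * q ^ ((1:ℝ)/c)) ^ β < (max A q * q) ^ β := by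
            apply Real.rpow_lt_rpow (by positivity) ?_ hβ0
            calc A * q ^ ((1:ℝ)/c) < A * q := mul_lt_mul_of_pos_left h5 hA0
              _ ≤ max A q * q := mul_le_mul_of_nonneg_right (le_max_left _ _) hq0.le
        _ ≤ L ^ (3:ℕ) := lemA' hβ0.le hβ1 hq0 hL1 (by positivity) hWq hLq
    · have hq1' : q = 1 := le_antisymm (not_lt.mp hq2) hq1
      have hA1 : (1:ℝ) < A := by
        have hφ1 : (1:ℝ) < φv ^ ((1:ℝ)/c) :=
          (Real.one_lt_rpow_iff_of_pos hφ0).mpr (Or.inl ⟨by linarith, by positivity⟩)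
        calc (1:ℝ) < φv ^ ((1:ℝ)/c) := hφ1
          _ = 1 * φv ^ ((1:ℝ)/c) := (one_mul _).symm
          _ ≤ (c:ℝ)/2 * φv ^ ((1:ℝ)/c) := by
              apply mul_le_mul_of_nonneg_right (by linarith) (by positivity)
      have hAL : A ≤ L := by
        have : K ≤ L := by rw [hq1', mul_one] at hKLq; exact hKLq
        linarith
      rw [hq1', Real.one_rpow, mul_one]
      calc A ^ β ≤ A ^ (1:ℝ) := Real.rpow_le_rpow_of_exponent_le hA1.le hβ1
        _ = A := Real.rpow_one A
        _ < A ^ (3:ℕ) := by nlinarith [mul_pos (sub_pos.mpr hA1) (mul_pos hA0 hA0), mul_pos (sub_pos.mpr hA1) hA0]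
        _ ≤ L ^ (3:ℕ) := pow_le_pow_left₀ hA0.le hAL 3
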